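/- arXiv:1610.09791 — 4 statements merged into one kernel-verified Lean document; each statement's English description precedes it below -/
import Mathlib

section
/- Fix 0 < β < α < 1/2 with α − β > 1/2 − α, and let n ≥ 2 be large enough that n^{β + 1/2 − 2α} exp(n^{−α}) < 1. Let p be a complex polynomial of degree at most n and ζ ∈ ℂ satisfying: p(ζ) = 0, |p'(ζ)| > 2 n^{1+α}, and |p^{(k)}(ζ)| < n^{k + 1/2 + β} for all k = 2, 3, …, n. Then |p(z)| > 1 for every z on the circle |z − ζ| = n^{−1−α}. Consequently the lemniscate {z : |p(z)| = 1} has a connected component contained in the open disk |z − ζ| < n^{−1−α}. -/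
/-- Certificate for a localized component of the lemniscate. Fix `0 < β < α < 1/2` with
`α - β > 1/2 - α` and `n ≥ 2` large enough that `n^{β+1/2-2α} e^{n^{-α}} < 1`. If a polynomial
`p` of degree at most `n` satisfies `p(ζ) = 0`, `|p'(ζ)| > 2 n^{1+α}` and
`|p^{(k)}(ζ)| < n^{k+1/2+β}` for `2 ≤ k ≤ n`, then `|p| > 1` on the circle
`|z - ζ| = n^{-1-α}`; consequently the lemniscate `{|p| = 1}` has a connected component
contained in the open disk `|z - ζ| < n^{-1-α}`. -/
theorem localized_component_certificate (α β : ℝ) (n : ℕ)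
    (hβ : 0 < β) (hβα : β < α) (hα : α < 1 / 2) (hgap : 1 / 2 - α < α - β) (hn : 2 ≤ n)
    (hsmall : (n : ℝ) ^ (β + 1 / 2 - 2 * α) * Real.exp ((n : ℝ) ^ (-α)) < 1)
    (p : Polynomial ℂ) (hdeg : p.natDegree ≤ n) (ζ : ℂ)
    (hzero : p.eval ζ = 0)
    (hderiv : 2 * (n : ℝ) ^ ((1 : ℝ) + α) < ‖(Polynomial.derivative p).eval ζ‖)
    (hhigher : ∀ k : ℕ, 2 ≤ k → k ≤ n →
      ‖(Polynomial.derivative^[k] p).eval ζ‖ < (n : ℝ) ^ ((k : ℝ) + 1 / 2 + β)) :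
    (∀ z : ℂ, ‖z - ζ‖ = (n : ℝ) ^ (-(1 : ℝ) - α) →
        1 < ‖p.eval z‖) ∧
    ∃ z₀ ∈ {z : ℂ | ‖p.eval z‖ = 1},
      ‖z₀ - ζ‖ < (n : ℝ) ^ (-(1 : ℝ) - α) ∧
      connectedComponentIn {z : ℂ | ‖p.eval z‖ = 1} z₀
        ⊆ Metric.ball ζ ((n : ℝ) ^ (-(1 : ℝ) - α)) := by
  have hn0 : (0 : ℝ) < n := by
    have : (2 : ℝ) ≤ n := by exact_mod_cast hn
    linarith
  set r : ℝ := (n : ℝ) ^ (-(1 : ℝ) - α) with hrdef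
  have hrpos : 0 < r := Real.rpow_pos_of_pos hn0 _
  set x : ℝ := (n : ℝ) ^ (-α) with hxdef
  have hxpos : 0 < x := Real.rpow_pos_of_pos hn0 _
  -- Part 1: the circle bound
  have hcirc : ∀ z : ℂ, ‖z - ζ‖ = r → 1 < ‖p.eval z‖ := by
    intro z hz
    set w : ℂ := z - ζ with hwdef
    set c : ℕ → ℂ := fun k => (Polynomial.taylor ζ p).coeff k with hcdef
    have hexp : p.eval z = ∑ k ∈ Finset.range (n + 1), c k * w ^ k := by
      rw [← Polynomial.taylor_eval_sub ζ p z]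
      exact Polynomial.eval_eq_sum_range'
        (by rw [Polynomial.natDegree_taylor]; omega) _
    have hc0 : c 0 = 0 := by
      simp [hcdef, Polynomial.taylor_coeff_zero, hzero]
    have hc1 : c 1 = (Polynomial.derivative p).eval ζ := by
      simp [hcdef, Polynomial.taylor_coeff_one]
    -- split the sum
    have hsplit : p.eval z = c 1 * w + ∑ k ∈ Finset.Ico 2 (n + 1), c k * w ^ k := by
      rw [hexp, Finset.range_eq_Ico,
        ← Finset.sum_Ico_consecutive (fun k => c k * w ^ k) (by omega : 0 ≤ 2)
          (by omega : 2 ≤ n + 1)]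
      have h02 : ∑ k ∈ Finset.Ico 0 2, c k * w ^ k = c 1 * w := by
        rw [← Finset.range_eq_Ico]
        simp [Finset.sum_range_succ, hc0]
      rw [h02]
    set T : ℂ := ∑ k ∈ Finset.Ico 2 (n + 1), c k * w ^ k with hTdef
    -- per-term bound for the tail
    have hterm : ∀ k ∈ Finset.Ico 2 (n + 1),
        ‖c k * w ^ k‖ ≤ (n : ℝ) ^ ((1 : ℝ) / 2 + β) * (x ^ k / (Nat.factorial k)) := by
      intro k hk
      rw [Finset.mem_Ico] at hk
      have hk2 : 2 ≤ k := hk.1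
      have hkn : k ≤ n := by omega
      have hDk : (Polynomial.derivative^[k] p).eval ζ = ((Nat.factorial k) : ℂ) * c k := by
        have h1 : (Polynomial.derivative^[k] p) = (Nat.factorial k) • Polynomial.hasseDeriv k p := by
          rw [← Polynomial.factorial_smul_hasseDeriv]; rfl
        rw [h1, hcdef]
        simp [Polynomial.taylor_coeff, nsmul_eq_mul]
      have hfacpos : (0 : ℝ) < ((Nat.factorial k) : ℝ) := by positivity
      have hck : ‖c k‖ ≤ (n : ℝ) ^ ((k : ℝ) + 1 / 2 + β) / (Nat.factorial k) := by
        rw [le_div_iff₀ hfacpos]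
        have h3 := (hhigher k hk2 hkn).le
        rw [hDk] at h3
        calc ‖c k‖ * ((Nat.factorial k) : ℝ)
            = ‖((Nat.factorial k) : ℂ) * c k‖ := by
              rw [norm_mul, Complex.norm_natCast]; ring
          _ ≤ (n : ℝ) ^ ((k : ℝ) + 1 / 2 + β) := h3
      have hwabs : ‖w ^ k‖ = r ^ k := by
        rw [norm_pow, hz]
      have hrw : (n : ℝ) ^ ((k : ℝ) + 1 / 2 + β) * r ^ k
          = (n : ℝ) ^ ((1 : ℝ) / 2 + β) * x ^ k := by
        rw [hrdef, hxdef, ← Real.rpow_natCast ((n : ℝ) ^ (-(1 : ℝ) - α)) k,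
          ← Real.rpow_natCast ((n : ℝ) ^ (-α)) k,
          ← Real.rpow_mul hn0.le, ← Real.rpow_mul hn0.le,
          ← Real.rpow_add hn0, ← Real.rpow_add hn0]
        ring_nf
      calc ‖c k * w ^ k‖ = ‖c k‖ * r ^ k := by
            rw [norm_mul, hwabs]
        _ ≤ ((n : ℝ) ^ ((k : ℝ) + 1 / 2 + β) / (Nat.factorial k)) * r ^ k :=
            mul_le_mul_of_nonneg_right hck (by positivity)
        _ = ((n : ℝ) ^ ((k : ℝ) + 1 / 2 + β) * r ^ k) / (Nat.factorial k) := by ring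
        _ = (n : ℝ) ^ ((1 : ℝ) / 2 + β) * (x ^ k / (Nat.factorial k)) := by rw [hrw]; ring
    -- tail sum bound
    have hxsum : ∑ k ∈ Finset.Ico 2 (n + 1), x ^ k / (Nat.factorial k)
        ≤ x ^ 2 * Real.exp x := by
      rw [Finset.sum_Ico_eq_sum_range]
      have hle : ∀ j ∈ Finset.range (n + 1 - 2),
          x ^ (2 + j) / (Nat.factorial (2+j)) ≤ x ^ 2 * (x ^ j / (Nat.factorial j)) := by
        intro j _
        rw [pow_add]
        have hfac : ((Nat.factorial j) : ℝ) ≤ ((Nat.factorial (2+j)) : ℝ) := by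
          exact_mod_cast Nat.factorial_le (Nat.le_add_left j 2)
        have hj : (0 : ℝ) < ((Nat.factorial j) : ℝ) := by positivity
        have h2j : (0 : ℝ) < ((Nat.factorial (2+j)) : ℝ) := by positivity
        rw [div_le_iff₀ h2j]
        have h4 : x ^ j ≤ x ^ j / (Nat.factorial j) * (Nat.factorial (2+j)) := by
          rw [div_mul_eq_mul_div, le_div_iff₀ hj]
          have := mul_le_mul_of_nonneg_left hfac (pow_nonneg hxpos.le j)
          linarith
        calc x ^ 2 * x ^ j ≤ x ^ 2 * (x ^ j / (Nat.factorial j) * (Nat.factorial (2+j))) :=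
              mul_le_mul_of_nonneg_left h4 (by positivity)
          _ = x ^ 2 * (x ^ j / (Nat.factorial j)) * (Nat.factorial (2+j)) := by ring
      calc ∑ j ∈ Finset.range (n + 1 - 2), x ^ (2 + j) / (Nat.factorial (2+j))
          ≤ ∑ j ∈ Finset.range (n + 1 - 2), x ^ 2 * (x ^ j / (Nat.factorial j)) :=
            Finset.sum_le_sum hle
        _ = x ^ 2 * ∑ j ∈ Finset.range (n + 1 - 2), x ^ j / (Nat.factorial j) := by
            rw [Finset.mul_sum]
        _ ≤ x ^ 2 * Real.exp x :=
            mul_le_mul_of_nonneg_left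
              (Real.sum_le_exp_of_nonneg hxpos.le _) (by positivity)
    have hx2 : (n : ℝ) ^ ((1 : ℝ) / 2 + β) * (x ^ 2 * Real.exp x)
        = (n : ℝ) ^ (β + 1 / 2 - 2 * α) * Real.exp x := by
      rw [hxdef, ← Real.rpow_natCast ((n : ℝ) ^ (-α)) 2, ← Real.rpow_mul hn0.le,
        show (n : ℝ) ^ ((1:ℝ)/2 + β) * ((n : ℝ) ^ (-α * (2:ℕ)) * Real.exp ((n : ℝ) ^ (-α)))
          = (n : ℝ) ^ ((1:ℝ)/2 + β) * (n : ℝ) ^ (-α * (2:ℕ)) * Real.exp ((n : ℝ) ^ (-α)) by ring,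
        ← Real.rpow_add hn0]
      norm_num
      ring_nf
    have htail : ‖T‖ < 1 := by
      calc ‖T‖ ≤ ∑ k ∈ Finset.Ico 2 (n + 1),
            ‖c k * w ^ k‖ := norm_sum_le _ _
        _ ≤ ∑ k ∈ Finset.Ico 2 (n + 1),
            (n : ℝ) ^ ((1 : ℝ) / 2 + β) * (x ^ k / (Nat.factorial k)) := Finset.sum_le_sum hterm
        _ = (n : ℝ) ^ ((1 : ℝ) / 2 + β) * ∑ k ∈ Finset.Ico 2 (n + 1), x ^ k / (Nat.factorial k) := by
            rw [Finset.mul_sum]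
        _ ≤ (n : ℝ) ^ ((1 : ℝ) / 2 + β) * (x ^ 2 * Real.exp x) :=
            mul_le_mul_of_nonneg_left hxsum (by positivity)
        _ = (n : ℝ) ^ (β + 1 / 2 - 2 * α) * Real.exp x := hx2
        _ < 1 := hsmall
    -- main term bound
    have hmain : 2 < ‖c 1 * w‖ := by
      have habs : ‖c 1 * w‖ = ‖(Polynomial.derivative p).eval ζ‖ * r := by
        rw [norm_mul, hc1, hz]
      have hone : (n : ℝ) ^ ((1 : ℝ) + α) * r = 1 := by
        rw [hrdef, ← Real.rpow_add hn0]
        norm_num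
      have h5 : 2 * ((n : ℝ) ^ ((1 : ℝ) + α) * r)
          < ‖(Polynomial.derivative p).eval ζ‖ * r := by
        rw [← mul_assoc]
        exact mul_lt_mul_of_pos_right hderiv hrpos
      rw [hone] at h5
      rw [habs]; linarith
    -- combine
    have hfinal : ‖c 1 * w‖ ≤ ‖p.eval z‖ + ‖T‖ := by
      calc ‖c 1 * w‖ = ‖p.eval z + -T‖ := by
            rw [hsplit]; ring_nf
        _ ≤ ‖p.eval z‖ + ‖-T‖ := norm_add_le _ _
        _ = ‖p.eval z‖ + ‖T‖ := by rw [norm_neg]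
    linarith
  refine ⟨hcirc, ?_⟩
  -- Part 2: existence of the localized component
  have hcont : Continuous fun t : ℝ => ‖p.eval (ζ + (t : ℂ))‖ := by
    exact continuous_norm.comp
      ((p.continuous_aeval).comp (continuous_const.add Complex.continuous_ofReal))
  set g : ℝ → ℝ := fun t => ‖p.eval (ζ + (t : ℂ))‖ with hgdef
  have hg0 : g 0 = 0 := by simp [hgdef, hzero]
  have hgr : 1 < g r := by
    apply hcirc
    rw [show ζ + (r : ℂ) - ζ = (r : ℂ) by ring, Complex.norm_real, Real.norm_eq_abs, abs_of_pos hrpos]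
  have hIVT := intermediate_value_Icc hrpos.le hcont.continuousOn
  have h1mem : (1 : ℝ) ∈ Set.Icc (g 0) (g r) := by
    rw [hg0]; exact ⟨zero_le_one, hgr.le⟩
  obtain ⟨t, ht, hgt⟩ := hIVT h1mem
  set z₀ : ℂ := ζ + (t : ℂ) with hz0def
  have htlt : t < r := by
    rcases lt_or_eq_of_le ht.2 with h | h
    · exact h
    · exfalso; rw [h] at hgt; rw [hgt] at hgr; exact lt_irrefl _ hgr
  have hz₀S : z₀ ∈ {z : ℂ | ‖p.eval z‖ = 1} := hgt
  have hz₀d : ‖z₀ - ζ‖ = t := by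
    rw [hz0def, show ζ + (t : ℂ) - ζ = (t : ℂ) by ring, Complex.norm_real, Real.norm_eq_abs,
      abs_of_nonneg ht.1]
  refine ⟨z₀, hz₀S, by rw [hz₀d]; exact htlt, ?_⟩
  -- the connected component is trapped in the ball
  set S := {z : ℂ | ‖p.eval z‖ = 1} with hSdef
  have hpre : IsPreconnected (connectedComponentIn S z₀) :=
    isPreconnected_connectedComponentIn
  apply hpre.subset_left_of_subset_union Metric.isOpen_ball
    Metric.isClosed_closedBall.isOpen_compl
    (disjoint_compl_right.mono_left Metric.ball_subset_closedBall)
  · intro y hy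
    have hyS : y ∈ S := connectedComponentIn_subset S z₀ hy
    have hyne : dist y ζ ≠ r := by
      intro hEq
      have : 1 < ‖p.eval y‖ := by
        apply hcirc; rw [← Complex.dist_eq]; exact hEq
      rw [hyS] at this; exact lt_irrefl _ this
    rcases lt_or_gt_of_ne hyne with h | h
    · exact Or.inl (Metric.mem_ball.mpr h)
    · exact Or.inr (by simp [Metric.mem_closedBall]; exact h)
  · exact ⟨z₀, mem_connectedComponentIn hz₀S, Metric.mem_ball.mpr (by
      rw [Complex.dist_eq, hz₀d]; exact htlt)⟩
end

section
/- Fix s > 0. For z ∈ ℂ set a(z) = Σ_{k=0}^n |z|^{2k}, b₁(z) = z̄ Σ_{k=1}^n k |z|^{2k−2}, and c₁(z) = Σ_{k=1}^n k² |z|^{2k−2}. Then there exist a constant C₂(s) > 0 and N(s) ∈ ℕ such that for all n ≥ N(s) and all z in the annulus T_n(s) = {z : e^{−s/n} < |z| < e^{s/n}}, one has (a(z) c₁(z) − |b₁(z)|²)/a(z) ≥ C₂(s) n³. -/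
/-- `a(z) = ∑_{k=0}^n |z|^{2k}` for the Kac covariance kernel. -/
noncomputable def kacA (n : ℕ) (z : ℂ) : ℝ :=
  ∑ k ∈ Finset.range (n + 1), ‖z‖ ^ (2 * k)

/-- `b₁(z) = z̄ ∑_{k=1}^n k |z|^{2k-2}` for the Kac kernel; this is the real sum
`∑_{k=1}^n k |z|^{2k-2}`, so that `b₁ = z̄ ⬝ kacBsum` and `|b₁|² = |z|² ⬝ kacBsum²`. -/
noncomputable def kacBsum (n : ℕ) (z : ℂ) : ℝ :=
  ∑ k ∈ Finset.Icc 1 n, (k : ℝ) * ‖z‖ ^ (2 * k - 2)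

/-- `c₁(z) = ∑_{k=1}^n k² |z|^{2k-2}` for the Kac kernel. -/
noncomputable def kacC1 (n : ℕ) (z : ℂ) : ℝ :=
  ∑ k ∈ Finset.Icc 1 n, (k : ℝ) ^ 2 * ‖z‖ ^ (2 * k - 2)

open Finset

lemma sum_range_id_real (N : ℕ) : ∑ j ∈ range N, (j:ℝ) = N*(N-1)/2 := by
  induction N with
  | zero => simp
  | succ n ih => rw [sum_range_succ, ih]; push_cast; ring

lemma sum_range_sq_real (N : ℕ) : ∑ j ∈ range N, (j:ℝ)^2 = N*(N-1)*(2*N-1)/6 := by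
  induction N with
  | zero => simp
  | succ n ih => rw [sum_range_succ, ih]; push_cast; ring

lemma sum_sq_diff_eq (N : ℕ) :
    ∑ j ∈ range N, ∑ k ∈ range N, ((j:ℝ)-(k:ℝ))^2 = N^2*(N-1)*(N+1)/6 := by
  have h : ∀ j : ℕ, ∑ k ∈ range N, ((j:ℝ)-(k:ℝ))^2
      = (N:ℝ)*(j:ℝ)^2 - 2*(j:ℝ)*((N:ℝ)*(N-1)/2) + (N:ℝ)*(N-1)*(2*N-1)/6 := by
    intro j
    have e : ∀ k : ℕ, ((j:ℝ)-(k:ℝ))^2 = (j:ℝ)^2 - 2*(j:ℝ)*(k:ℝ) + (k:ℝ)^2 :=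
      fun k => by ring
    simp_rw [e]
    rw [sum_add_distrib, sum_sub_distrib, sum_const, ← mul_sum, card_range,
        sum_range_id_real, sum_range_sq_real]
    ring
  simp_rw [h]
  rw [sum_add_distrib, sum_sub_distrib, sum_const, card_range, ← mul_sum,
      sum_range_sq_real]
  have : ∑ j ∈ range N, 2*(j:ℝ)*((N:ℝ)*(N-1)/2)
      = (∑ j ∈ range N, (j:ℝ)) * ((N:ℝ)*(N-1)) := by
    rw [sum_mul]; exact sum_congr rfl fun j _ => by ring
  rw [this, sum_range_id_real]
  ring

lemma cov_identity (N : ℕ) (x : ℝ) :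
    (∑ j ∈ range N, x^j) * (∑ k ∈ range N, (k:ℝ)^2 * x^k)
      - (∑ k ∈ range N, (k:ℝ) * x^k)^2
    = (1/2) * ∑ j ∈ range N, ∑ k ∈ range N, ((j:ℝ)-(k:ℝ))^2 * (x^j * x^k) := by
  have h1 : (∑ j ∈ range N, x^j) * (∑ k ∈ range N, (k:ℝ)^2 * x^k)
      = ∑ j ∈ range N, ∑ k ∈ range N, (k:ℝ)^2 * (x^j * x^k) := by
    rw [sum_mul_sum]
    exact sum_congr rfl fun j _ => sum_congr rfl fun k _ => by ring
  have h2 : (∑ k ∈ range N, (k:ℝ) * x^k)^2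
      = ∑ j ∈ range N, ∑ k ∈ range N, ((j:ℝ)*(k:ℝ)) * (x^j * x^k) := by
    rw [sq, sum_mul_sum]
    exact sum_congr rfl fun j _ => sum_congr rfl fun k _ => by ring
  have hswap : ∑ j ∈ range N, ∑ k ∈ range N, ((k:ℝ)^2 - (j:ℝ)*k) * (x^j * x^k)
      = ∑ j ∈ range N, ∑ k ∈ range N, ((j:ℝ)^2 - (j:ℝ)*k) * (x^j * x^k) := by
    rw [Finset.sum_comm]
    exact sum_congr rfl fun j _ => sum_congr rfl fun k _ => by ring
  have key : 2 * ((∑ j ∈ range N, x^j) * (∑ k ∈ range N, (k:ℝ)^2 * x^k)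
      - (∑ k ∈ range N, (k:ℝ) * x^k)^2)
      = ∑ j ∈ range N, ∑ k ∈ range N, ((j:ℝ)-(k:ℝ))^2 * (x^j * x^k) := by
    rw [h1, h2, ← sum_sub_distrib]
    simp_rw [← sum_sub_distrib]
    have step : ∑ j ∈ range N, ∑ k ∈ range N,
        ((k:ℝ)^2 * (x^j*x^k) - ((j:ℝ)*(k:ℝ)) * (x^j*x^k))
        = ∑ j ∈ range N, ∑ k ∈ range N, ((k:ℝ)^2 - (j:ℝ)*k) * (x^j * x^k) :=
      sum_congr rfl fun j _ => sum_congr rfl fun k _ => by ring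
    rw [step, two_mul]
    nth_rewrite 2 [hswap]
    rw [← sum_add_distrib]
    simp_rw [← sum_add_distrib]
    exact sum_congr rfl fun j _ => sum_congr rfl fun k _ => by ring
  linarith

/-- There exist `C₂(s) > 0` and `N(s)` such that for all `n ≥ N(s)` and all `z` in the
annulus `T_n(s) = {e^{-s/n} < |z| < e^{s/n}}`, one has
`(a c₁ - |b₁|²)/a ≥ C₂(s) n³`. -/
theorem kac_covariance_determinant_lower_bound (s : ℝ) (hs : 0 < s) :
    ∃ C₂ > (0 : ℝ), ∃ N : ℕ, ∀ n ≥ N, ∀ z : ℂ,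
      Real.exp (-s / n) < ‖z‖ → ‖z‖ < Real.exp (s / n) →
        C₂ * (n : ℝ) ^ 3 ≤
          (kacA n z * kacC1 n z - ‖z‖ ^ 2 * kacBsum n z ^ 2) / kacA n z := by
  refine ⟨Real.exp (-(8*s)) / 12, by positivity, 1, fun n hn z hz1 hz2 => ?_⟩
  have hn1 : 1 ≤ n := hn
  have hnR : (1:ℝ) ≤ (n:ℝ) := by exact_mod_cast hn1
  have hn0 : (n:ℝ) ≠ 0 := by positivity
  set r : ℝ := ‖z‖ with hr
  have hr0 : 0 < r := lt_trans (Real.exp_pos _) hz1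
  set x : ℝ := r^2 with hxdef
  have hx0 : 0 < x := by positivity
  -- bounds on x
  have hxlo : Real.exp (-(2*s)/n) ≤ x := by
    have h := mul_lt_mul'' hz1 hz1 (Real.exp_pos _).le (Real.exp_pos _).le
    have : Real.exp (-(2*s)/n) = Real.exp (-s/n) * Real.exp (-s/n) := by
      rw [← Real.exp_add]; ring_nf
    rw [this, hxdef, sq]; exact h.le
  have hxhi : x ≤ Real.exp ((2*s)/n) := by
    have h := mul_lt_mul'' hz2 hz2 hr0.le hr0.le
    have : Real.exp ((2*s)/n) = Real.exp (s/n) * Real.exp (s/n) := by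
      rw [← Real.exp_add]; ring_nf
    rw [this, hxdef, sq]; exact h.le
  -- rewrite kac functions in terms of x
  have hA : kacA n z = ∑ k ∈ range (n+1), x^k := by
    unfold kacA
    exact sum_congr rfl fun k _ => by rw [pow_mul]
  have hpow : ∀ k : ℕ, r ^ (2*k - 2) = x ^ (k-1) := by
    intro k
    rw [hxdef, ← pow_mul]
    congr 1
    omega
  have hsub : Finset.Icc 1 n ⊆ range (n+1) := by
    intro k hk; simp only [mem_Icc] at hk; simp only [mem_range]; omega
  have hB : x * kacBsum n z = ∑ k ∈ range (n+1), (k:ℝ) * x^k := by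
    unfold kacBsum
    rw [mul_sum, ← hr]
    have e1 : ∑ k ∈ Icc 1 n, x * ((k:ℝ) * r^(2*k-2)) = ∑ k ∈ Icc 1 n, (k:ℝ) * x^k := by
      refine sum_congr rfl fun k hk => ?_
      simp only [mem_Icc] at hk
      rw [hpow k]
      have hx' : x * x^(k-1) = x^k := by
        rw [← pow_succ']; congr 1; omega
      rw [← hx']; ring
    rw [e1]
    exact sum_subset hsub (fun k hk hk' => by
      simp only [mem_range] at hk; simp only [mem_Icc] at hk'
      have : k = 0 := by omega
      simp [this])
  have hC : x * kacC1 n z = ∑ k ∈ range (n+1), (k:ℝ)^2 * x^k := by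
    unfold kacC1
    rw [mul_sum, ← hr]
    have e1 : ∑ k ∈ Icc 1 n, x * ((k:ℝ)^2 * r^(2*k-2)) = ∑ k ∈ Icc 1 n, (k:ℝ)^2 * x^k := by
      refine sum_congr rfl fun k hk => ?_
      simp only [mem_Icc] at hk
      rw [hpow k]
      have hx' : x * x^(k-1) = x^k := by
        rw [← pow_succ']; congr 1; omega
      rw [← hx']; ring
    rw [e1]
    exact sum_subset hsub (fun k hk hk' => by
      simp only [mem_range] at hk; simp only [mem_Icc] at hk'
      have : k = 0 := by omega
      simp [this])
  -- lower bound on powers of x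
  have hxpow : ∀ m : ℕ, m ≤ 2*n → Real.exp (-(4*s)) ≤ x^m := by
    intro m hm
    rcases le_or_gt 1 x with h1 | h1
    · have : Real.exp (-(4*s)) ≤ 1 := by
        rw [← Real.exp_zero]; exact Real.exp_le_exp.mpr (by linarith)
      refine le_trans this ?_
      calc (1:ℝ) = 1^m := (one_pow m).symm
        _ ≤ x^m := pow_le_pow_left₀ zero_le_one h1 m
    · have h2n : Real.exp (-(4*s)) ≤ x^(2*n) := by
        have : Real.exp (-(4*s)) = (Real.exp (-(2*s)/n))^(2*n) := by
          rw [← Real.exp_nat_mul]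
          congr 1
          field_simp
          push_cast
          ring
        rw [this]
        exact pow_le_pow_left₀ (Real.exp_pos _).le hxlo (2*n)
      exact le_trans h2n (pow_le_pow_of_le_one hx0.le h1.le hm)
  -- upper bound on powers of x
  have hxk : ∀ k : ℕ, k ≤ n → x^k ≤ Real.exp (2*s) := by
    intro k hk
    rcases le_or_gt x 1 with h1 | h1
    · have : x^k ≤ 1 := pow_le_one₀ hx0.le h1
      exact le_trans this (by rw [← Real.exp_zero]; exact Real.exp_le_exp.mpr (by linarith))
    · calc x^k ≤ x^n := pow_le_pow_right₀ h1.le hk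
        _ ≤ (Real.exp ((2*s)/n))^n := pow_le_pow_left₀ hx0.le hxhi n
        _ = Real.exp (2*s) := by
            rw [← Real.exp_nat_mul]
            congr 1
            field_simp
  -- bounds on A
  have hApos : (0:ℝ) < kacA n z := by
    rw [hA]
    have : (1:ℝ) = x^0 := by simp
    calc (0:ℝ) < 1 := one_pos
      _ = x^0 := this
      _ ≤ ∑ k ∈ range (n+1), x^k :=
        single_le_sum (f := fun k => x^k) (fun k _ => by positivity) (by simp)
  have hAub : kacA n z ≤ (n+1) * Real.exp (2*s) := by
    rw [hA]
    calc ∑ k ∈ range (n+1), x^k ≤ ∑ k ∈ range (n+1), Real.exp (2*s) :=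
          sum_le_sum (fun k hk => hxk k (by simp only [mem_range] at hk; omega))
      _ = (n+1) * Real.exp (2*s) := by rw [sum_const, card_range]; push_cast; ring
  -- main quantity
  set T : ℝ := (∑ j ∈ range (n+1), x^j) * (∑ k ∈ range (n+1), (k:ℝ)^2 * x^k)
      - (∑ k ∈ range (n+1), (k:ℝ) * x^k)^2 with hT
  have hTeq : T = x * (kacA n z * kacC1 n z - x * kacBsum n z ^ 2) := by
    rw [hT, ← hA, ← hB, ← hC]; ring
  have hTlb : Real.exp (-(4*s)) * (((n:ℝ)+1)^2 * n * (n+2) / 12) ≤ T := by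
    rw [hT, cov_identity]
    have step : ∀ j ∈ range (n+1), ∀ k ∈ range (n+1),
        ((j:ℝ)-(k:ℝ))^2 * Real.exp (-(4*s)) ≤ ((j:ℝ)-(k:ℝ))^2 * (x^j * x^k) := by
      intro j hj k hk
      simp only [mem_range] at hj hk
      refine mul_le_mul_of_nonneg_left ?_ (by positivity)
      rw [← pow_add]
      exact hxpow (j+k) (by omega)
    have hsum : ∑ j ∈ range (n+1), ∑ k ∈ range (n+1), ((j:ℝ)-(k:ℝ))^2 * Real.exp (-(4*s))
        ≤ ∑ j ∈ range (n+1), ∑ k ∈ range (n+1), ((j:ℝ)-(k:ℝ))^2 * (x^j * x^k) :=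
      sum_le_sum fun j hj => sum_le_sum fun k hk => step j hj k hk
    have hval : ∑ j ∈ range (n+1), ∑ k ∈ range (n+1), ((j:ℝ)-(k:ℝ))^2 * Real.exp (-(4*s))
        = (((n:ℝ)+1)^2 * n * (n+2) / 6) * Real.exp (-(4*s)) := by
      simp_rw [← sum_mul]
      rw [sum_sq_diff_eq]
      push_cast; ring
    nlinarith [hsum, hval]
  -- final assembly
  have hxA : 0 < x * kacA n z := by positivity
  have hgoal : (kacA n z * kacC1 n z - x * kacBsum n z ^ 2) / kacA n z
      = T / (x * kacA n z) := by
    rw [hTeq, mul_div_mul_left _ _ (ne_of_gt hx0)]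
  rw [hgoal, le_div_iff₀ hxA]
  have hxAub : x * kacA n z ≤ Real.exp (2*s) * ((n+1) * Real.exp (2*s)) := by
    have hxe : x ≤ Real.exp (2*s) := le_trans hxhi (Real.exp_le_exp.mpr (by
      rw [div_le_iff₀ (by positivity : (0:ℝ) < (n:ℝ))]
      nlinarith))
    exact mul_le_mul hxe hAub hApos.le (Real.exp_pos _).le
  have hC2n : 0 ≤ Real.exp (-(8*s)) / 12 * (n:ℝ)^3 := by positivity
  calc Real.exp (-(8*s)) / 12 * (n:ℝ)^3 * (x * kacA n z)
      ≤ Real.exp (-(8*s)) / 12 * (n:ℝ)^3 * (Real.exp (2*s) * ((n+1) * Real.exp (2*s))) :=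
        mul_le_mul_of_nonneg_left hxAub hC2n
    _ = Real.exp (-(8*s)) * Real.exp (2*s) * Real.exp (2*s) * ((n:ℝ)^3 * (n+1)) / 12 := by
        ring
    _ = Real.exp (-(4*s)) * ((n:ℝ)^3 * (n+1)) / 12 := by
        rw [← Real.exp_add, ← Real.exp_add]; ring_nf
    _ ≤ Real.exp (-(4*s)) * (((n:ℝ)+1)^2 * n * (n+2) / 12) := by
        have hpoly : (n:ℝ)^3*((n:ℝ)+1) ≤ ((n:ℝ)+1)^2*(n:ℝ)*((n:ℝ)+2) := by
          nlinarith [hnR]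
        have h12 : (n:ℝ)^3*((n:ℝ)+1)/12 ≤ ((n:ℝ)+1)^2*(n:ℝ)*((n:ℝ)+2)/12 := by linarith
        calc Real.exp (-(4*s)) * ((n:ℝ)^3 * ((n:ℝ)+1)) / 12
            = Real.exp (-(4*s)) * ((n:ℝ)^3*((n:ℝ)+1)/12) := by ring
          _ ≤ Real.exp (-(4*s)) * (((n:ℝ)+1)^2*(n:ℝ)*((n:ℝ)+2)/12) :=
            mul_le_mul_of_nonneg_left h12 (Real.exp_pos _).le
    _ ≤ T := hTlb
end

section
/- For n ≥ 2 and z ∈ ℂ with |z| ≠ 1, set a_n(z) = Σ_{k=0}^n |z|^{2k}, b_n(z) = z̄ Σ_{k=1}^n k |z|^{2k−2}, c_n(z) = Σ_{k=1}^n k² |z|^{2k−2}, and |Σ_n| = a_n c_n − |b_n|². Then |Σ_n|/a_n² = 1/(1−|z|²)² − (n+1)² |z|^{2n}/(1−|z|^{2n+2})². Moreover: for |z| < 1, |Σ_n|/a_n³ ≤ 1/(1−|z|²) and |Σ_n|/a_n³ → 1/(1−|z|²) as n → ∞; for |z| > 1, |Σ_n|/a_n³ ≤ 1/(|z|²−1)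 and |Σ_n|/a_n³ → 0 as n → ∞. -/
open Filter Finset

/-- `|Σ_n| = a_n c_n - |b_n|²`, the determinant of the covariance matrix of
`(p_n(z), p_n'(z))` for the Kac random polynomial. -/
noncomputable def kacDet (n : ℕ) (z : ℂ) : ℝ :=
  kacA n z * kacC1 n z - ‖z‖ ^ 2 * kacBsum n z ^ 2

noncomputable def S0 (r : ℝ) (n : ℕ) : ℝ := ∑ k ∈ range (n+1), r ^ k
noncomputable def SB (r : ℝ) (n : ℕ) : ℝ := ∑ k ∈ range n, ((k:ℝ)+1) * r ^ k
noncomputable def SC (r : ℝ) (n : ℕ) : ℝ := ∑ k ∈ range n, ((k:ℝ)+1)^2 * r ^ k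

lemma S0_mul (r : ℝ) (n : ℕ) : S0 r n * (1 - r) = 1 - r^(n+1) := by
  induction n with
  | zero => simp [S0]
  | succ n ih =>
    rw [S0, sum_range_succ, ← S0]
    linear_combination ih

lemma SB_mul (r : ℝ) (n : ℕ) : SB r n * (1 - r)^2 = 1 - ((n:ℝ)+1) * r^n + (n:ℝ) * r^(n+1) := by
  induction n with
  | zero => simp [SB]
  | succ n ih =>
    rw [SB, sum_range_succ, ← SB]
    push_cast
    linear_combination ih

lemma SC_mul (r : ℝ) (n : ℕ) : SC r n * (1 - r)^3 =
    1 + r - ((n:ℝ)+1)^2 * r^n + (2*(n:ℝ)^2+2*(n:ℝ)-1) * r^(n+1) - (n:ℝ)^2 * r^(n+2) := by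
  induction n with
  | zero => simp [SC]
  | succ n ih =>
    rw [SC, sum_range_succ, ← SC]
    push_cast
    linear_combination ih

lemma det_mul (r : ℝ) (n : ℕ) :
    (S0 r n * SC r n - r * SB r n ^ 2) * (1-r)^4 =
      (1 - r^(n+1))^2 - ((n:ℝ)+1)^2 * r^n * (1-r)^2 := by
  calc (S0 r n * SC r n - r * SB r n ^ 2) * (1-r)^4
      = (S0 r n * (1-r)) * (SC r n * (1-r)^3) - r * (SB r n * (1-r)^2)^2 := by ring
    _ = (1 - r^(n+1)) * (1 + r - ((n:ℝ)+1)^2 * r^n + (2*(n:ℝ)^2+2*(n:ℝ)-1) * r^(n+1)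
          - (n:ℝ)^2 * r^(n+2)) - r * (1 - ((n:ℝ)+1) * r^n + (n:ℝ) * r^(n+1))^2 := by
        rw [S0_mul, SB_mul, SC_mul]
    _ = (1 - r^(n+1))^2 - ((n:ℝ)+1)^2 * r^n * (1-r)^2 := by ring


lemma one_le_S0 (r : ℝ) (hr0 : 0 ≤ r) (n : ℕ) : 1 ≤ S0 r n := by
  have := Finset.single_le_sum (f := fun k => r ^ k)
    (fun i _ => pow_nonneg hr0 i) (Finset.mem_range.2 (Nat.succ_pos n))
  simpa [S0] using this

lemma S0_pos (r : ℝ) (hr0 : 0 ≤ r) (n : ℕ) : 0 < S0 r n := lt_of_lt_of_le one_pos (one_le_S0 r hr0 n)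

lemma s_ne (r : ℝ) (hr0 : 0 ≤ r) (hr1 : r ≠ 1) (n : ℕ) : 1 - r^(n+1) ≠ 0 := by
  rcases lt_or_gt_of_ne hr1 with h | h
  · have : r^(n+1) < 1 := pow_lt_one₀ hr0 h (Nat.succ_ne_zero n)
    linarith
  · have : 1 < r^(n+1) := one_lt_pow₀ h (Nat.succ_ne_zero n)
    linarith

lemma main_id (r : ℝ) (hr0 : 0 ≤ r) (hr1 : r ≠ 1) (n : ℕ) :
    (S0 r n * SC r n - r * SB r n ^ 2) / (S0 r n)^2 =
      1/(1-r)^2 - ((n:ℝ)+1)^2 * r^n / (1 - r^(n+1))^2 := by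
  have h1r : (1:ℝ) - r ≠ 0 := sub_ne_zero.2 (Ne.symm hr1)
  have hs := s_ne r hr0 hr1 n
  have key := det_mul r n
  have hA2 := S0_mul r n
  have h4 : ((1:ℝ)-r)^4 ≠ 0 := pow_ne_zero _ h1r
  have e1 : (S0 r n)^2 * (1-r)^4 = (1 - r^(n+1))^2 * (1-r)^2 := by
    calc (S0 r n)^2 * (1-r)^4 = (S0 r n * (1-r))^2 * (1-r)^2 := by ring
      _ = (1 - r^(n+1))^2 * (1-r)^2 := by rw [hA2]
  rw [show (S0 r n * SC r n - r * SB r n ^ 2) / (S0 r n)^2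
      = ((S0 r n * SC r n - r * SB r n ^ 2) * (1-r)^4) / ((S0 r n)^2 * (1-r)^4) from
      (mul_div_mul_right _ _ h4).symm, key, e1]
  field_simp

lemma kacA_eq (n : ℕ) (z : ℂ) : kacA n z = S0 (‖z‖ ^ 2) n := by
  unfold kacA S0
  exact Finset.sum_congr rfl fun k _ => by rw [pow_mul]

lemma kacB_eq (n : ℕ) (z : ℂ) : kacBsum n z = SB (‖z‖ ^ 2) n := by
  unfold kacBsum SB
  rw [← Finset.Ico_add_one_right_eq_Icc, Finset.sum_Ico_eq_sum_range]
  refine Finset.sum_congr (by norm_num) fun k _ => ?_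
  rw [show 2 * (1 + k) - 2 = 2 * k by omega, pow_mul]
  push_cast; ring

lemma kacC_eq (n : ℕ) (z : ℂ) : kacC1 n z = SC (‖z‖ ^ 2) n := by
  unfold kacC1 SC
  rw [← Finset.Ico_add_one_right_eq_Icc, Finset.sum_Ico_eq_sum_range]
  refine Finset.sum_congr (by norm_num) fun k _ => ?_
  rw [show 2 * (1 + k) - 2 = 2 * k by omega, pow_mul]
  push_cast; ring

lemma kacDet_eq (n : ℕ) (z : ℂ) :
    kacDet n z = S0 (‖z‖ ^2) n * SC (‖z‖ ^2) n
      - ‖z‖ ^2 * SB (‖z‖ ^2) n ^ 2 := by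
  rw [kacDet, kacA_eq, kacB_eq, kacC_eq]

lemma det_nonneg (x : ℝ) (hx : 0 ≤ x) (n : ℕ) :
    0 ≤ S0 (x^2) n * SC (x^2) n - x^2 * SB (x^2) n ^ 2 := by
  have cs := Finset.sum_mul_sq_le_sq_mul_sq (Finset.range (n+1))
    (fun k => x ^ k) (fun k => (k:ℝ) * x ^ (k-1))
  have e1 : ∑ k ∈ range (n+1), (x ^ k) ^ 2 = S0 (x^2) n :=
    Finset.sum_congr rfl fun k _ => by rw [← pow_mul, ← pow_mul, mul_comm]
  have e2 : ∑ k ∈ range (n+1), ((k:ℝ) * x ^ (k-1)) ^ 2 = SC (x^2) n := by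
    rw [SC, Finset.sum_range_succ']
    simp only [Nat.cast_zero, zero_mul, ne_eq, OfNat.ofNat_ne_zero,
      not_false_eq_true, zero_pow, add_zero, Nat.add_sub_cancel]
    exact Finset.sum_congr rfl fun k _ => by push_cast; ring
  have e3 : ∑ k ∈ range (n+1), x ^ k * ((k:ℝ) * x ^ (k-1)) = x * SB (x^2) n := by
    rw [SB, Finset.mul_sum, Finset.sum_range_succ']
    simp only [Nat.cast_zero, zero_mul, mul_zero, add_zero, Nat.add_sub_cancel]
    exact Finset.sum_congr rfl fun k _ => by push_cast; ring
  rw [e1, e2, e3] at cs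
  nlinarith [cs]

lemma bound_lt (r : ℝ) (hr0 : 0 ≤ r) (hr : r < 1) (n : ℕ) :
    (S0 r n * SC r n - r * SB r n ^ 2) / (S0 r n)^3 ≤ 1/(1-r) := by
  have hA := S0_pos r hr0 n
  have h1r : (0:ℝ) < 1 - r := by linarith
  rw [div_le_div_iff₀ (by positivity) h1r]
  have key := det_mul r n
  have hA2 := S0_mul r n
  -- Bernoulli: 1 - r^(n+1) ≤ (n+1)(1-r)
  have hB : 1 + ((n:ℝ)+1) * (r-1) ≤ r^(n+1) := by
    have := one_add_mul_le_pow (a := r - 1) (by linarith) (n+1)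
    push_cast at this
    calc 1 + ((n:ℝ)+1) * (r-1) ≤ (1 + (r-1))^(n+1) := this
      _ = r^(n+1) := by ring_nf
  have hsle : r^(n+1) ≤ 1 := pow_le_one₀ hr0 hr.le
  have hs0 : 0 ≤ r^(n+1) := pow_nonneg hr0 _
  have hBne : 0 ≤ 1 - r^(n+1) := by linarith
  have h1 : (1 - r^(n+1))^2 ≤ (((n:ℝ)+1) * (1-r))^2 := by
    apply pow_le_pow_left₀ hBne
    nlinarith [hB]
  have h2 : r * r^n ≤ r^n := mul_le_of_le_one_left (pow_nonneg hr0 n) hr.le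
  have hstep : r^(n+1) * (1 - r^(n+1))^2 ≤ ((n:ℝ)+1)^2 * r^n * (1-r)^2 := by
    have e : r^(n+1) = r * r^n := by ring
    nlinarith [mul_le_mul_of_nonneg_left h1 hs0, pow_nonneg hr0 n,
      mul_nonneg (mul_nonneg hr0 (pow_nonneg hr0 n)) (sq_nonneg (((n:ℝ)+1)*(1-r))),
      sq_nonneg (((n:ℝ)+1)*(1-r))]
  have hD : (S0 r n * SC r n - r * SB r n ^ 2) * (1-r)^4 ≤ (1 - r^(n+1))^3 := by
    rw [key]; nlinarith [hstep]
  have h3 : (0:ℝ) < (1-r)^3 := by positivity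
  have hfin : (S0 r n * SC r n - r * SB r n ^ 2) * (1-r) * (1-r)^3 ≤ S0 r n ^3 * (1-r)^3 := by
    calc (S0 r n * SC r n - r * SB r n ^ 2) * (1-r) * (1-r)^3
        = (S0 r n * SC r n - r * SB r n ^ 2) * (1-r)^4 := by ring
      _ ≤ (1 - r^(n+1))^3 := hD
      _ = (S0 r n * (1-r))^3 := by rw [hA2]
      _ = S0 r n ^3 * (1-r)^3 := by ring
  have := le_of_mul_le_mul_right hfin h3
  linarith

lemma bound_gt (r : ℝ) (hr : 1 < r) (n : ℕ) :
    (S0 r n * SC r n - r * SB r n ^ 2) / (S0 r n)^3 ≤ 1/(r-1) := by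
  have hr0 : (0:ℝ) ≤ r := by linarith
  have hA := S0_pos r hr0 n
  have hr1 : (0:ℝ) < r - 1 := by linarith
  rw [div_le_div_iff₀ (by positivity) hr1]
  have key := det_mul r n
  have hA2 := S0_mul r n
  set s := r^(n+1) with hs
  set t := r^n with ht
  have ht1 : (1:ℝ) ≤ t := one_le_pow₀ hr.le
  have hs1 : (1:ℝ) ≤ s := one_le_pow₀ hr.le
  have hS0le : S0 r n ≤ ((n:ℝ)+1) * t := by
    have : ∀ k ∈ range (n+1), r ^ k ≤ t := fun k hk =>
      pow_le_pow_right₀ hr.le (Nat.lt_succ_iff.mp (mem_range.mp hk))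
    calc S0 r n ≤ ∑ _k ∈ range (n+1), t := Finset.sum_le_sum this
      _ = ((n:ℝ)+1) * t := by rw [Finset.sum_const, Finset.card_range, nsmul_eq_mul]; push_cast; ring
  have hsub : s - 1 ≤ ((n:ℝ)+1) * t * (r-1) := by
    have e : s - 1 = S0 r n * (r - 1) := by linarith [hA2]
    rw [e]
    exact mul_le_mul_of_nonneg_right hS0le hr1.le
  have hmain : (s-1)^2 * (2-s) ≤ ((n:ℝ)+1)^2 * t * (r-1)^2 := by
    rcases le_or_gt s 2 with h2 | h2
    · have hsq : (s-1)^2 ≤ (((n:ℝ)+1) * t * (r-1))^2 :=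
        pow_le_pow_left₀ (by linarith) hsub 2
      have htt : t * (2 - s) ≤ 1 := by
        have hst : s = r * t := by rw [hs, ht]; ring
        nlinarith [sq_nonneg (t-1), mul_nonneg (by linarith : (0:ℝ) ≤ r - 1) (sq_nonneg t)]
      have h5 : (s-1)^2 * (2-s) ≤ (((n:ℝ)+1) * t * (r-1))^2 * (2-s) :=
        mul_le_mul_of_nonneg_right hsq (by linarith)
      have h6 : (((n:ℝ)+1) * t * (r-1))^2 * (2-s) = ((n:ℝ)+1)^2 * (r-1)^2 * (t * (t * (2-s))) := by
        ring
      have h7 : t * (t * (2-s)) ≤ t :=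
        calc t * (t * (2-s)) ≤ t * 1 := mul_le_mul_of_nonneg_left htt (by linarith)
          _ = t := mul_one t
      have h8 : ((n:ℝ)+1)^2 * (r-1)^2 * (t * (t * (2-s))) ≤ ((n:ℝ)+1)^2 * (r-1)^2 * t :=
        mul_le_mul_of_nonneg_left h7 (by positivity)
      calc (s-1)^2 * (2-s) ≤ ((n:ℝ)+1)^2 * (r-1)^2 * (t * (t * (2-s))) := by rw [← h6]; exact h5
        _ ≤ ((n:ℝ)+1)^2 * (r-1)^2 * t := h8
        _ = ((n:ℝ)+1)^2 * t * (r-1)^2 := by ring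
    · have : (s-1)^2 * (2-s) ≤ 0 :=
        mul_nonpos_of_nonneg_of_nonpos (sq_nonneg _) (by linarith)
      have : (0:ℝ) ≤ ((n:ℝ)+1)^2 * t * (r-1)^2 := by positivity
      linarith
  have hD : (S0 r n * SC r n - r * SB r n ^ 2) * (r-1)^4 ≤ (s - 1)^3 := by
    have e : (S0 r n * SC r n - r * SB r n ^ 2) * (r-1)^4
        = (1 - s)^2 - ((n:ℝ)+1)^2 * t * (1-r)^2 := by
      rw [← key]; ring
    rw [e]; nlinarith [hmain]
  have h3 : (0:ℝ) < (r-1)^3 := by positivity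
  have hfin : (S0 r n * SC r n - r * SB r n ^ 2) * (r-1) * (r-1)^3 ≤ S0 r n ^3 * (r-1)^3 := by
    calc (S0 r n * SC r n - r * SB r n ^ 2) * (r-1) * (r-1)^3
        = (S0 r n * SC r n - r * SB r n ^ 2) * (r-1)^4 := by ring
      _ ≤ (s - 1)^3 := hD
      _ = (-(S0 r n * (1-r)))^3 := by rw [hA2]; ring
      _ = S0 r n ^3 * (r-1)^3 := by ring
  have := le_of_mul_le_mul_right hfin h3
  linarith

lemma div_cube (r : ℝ) (hr0 : 0 ≤ r) (n : ℕ) (X : ℝ) :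
    X / (S0 r n)^3 = X / (S0 r n)^2 * (S0 r n)⁻¹ := by
  rw [pow_succ, ← div_div, div_eq_mul_inv]

lemma S0_inv (r : ℝ) (hr0 : 0 ≤ r) (hr1 : r ≠ 1) (n : ℕ) :
    (S0 r n)⁻¹ = (1-r)/(1 - r^(n+1)) := by
  have h1r : (1:ℝ) - r ≠ 0 := sub_ne_zero.2 (Ne.symm hr1)
  have : S0 r n = (1 - r^(n+1))/(1-r) := by rw [eq_div_iff h1r]; exact S0_mul r n
  rw [this, inv_div]

lemma limit_lt (r : ℝ) (hr0 : 0 ≤ r) (hr : r < 1) :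
    Tendsto (fun n : ℕ => (S0 r n * SC r n - r * SB r n ^ 2) / (S0 r n)^3) atTop
      (nhds (1/(1-r))) := by
  have hr1 : r ≠ 1 := ne_of_lt hr
  have h1r : (1:ℝ) - r ≠ 0 := sub_ne_zero.2 (Ne.symm hr1)
  have hgeo : Tendsto (fun n : ℕ => r^n) atTop (nhds 0) :=
    tendsto_pow_atTop_nhds_zero_of_lt_one hr0 hr
  have hss : Tendsto (fun n : ℕ => r^(n+1)) atTop (nhds 0) :=
    hgeo.comp (tendsto_add_atTop_nat 1)
  have hnorm : ‖r‖ < 1 := by rwa [Real.norm_eq_abs, abs_of_nonneg hr0]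
  have h2 : Tendsto (fun n : ℕ => (n:ℝ)^2 * r^n) atTop (nhds 0) :=
    (summable_pow_mul_geometric_of_norm_lt_one 2 hnorm).tendsto_atTop_zero
  have h1 : Tendsto (fun n : ℕ => (n:ℝ)^1 * r^n) atTop (nhds 0) :=
    (summable_pow_mul_geometric_of_norm_lt_one 1 hnorm).tendsto_atTop_zero
  have hT : Tendsto (fun n : ℕ => ((n:ℝ)+1)^2 * r^n) atTop (nhds 0) := by
    have := (h2.add ((h1.const_mul 2).add hgeo))
    simp only [add_zero, mul_zero] at this
    refine this.congr fun n => by push_cast; ring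
  have hden : Tendsto (fun n : ℕ => 1 - r^(n+1)) atTop (nhds 1) := by
    have := (tendsto_const_nhds : Tendsto (fun _ : ℕ => (1:ℝ)) atTop (nhds 1)).sub hss
    simpa using this
  have hfrac : Tendsto (fun n : ℕ => ((n:ℝ)+1)^2 * r^n / (1 - r^(n+1))^2) atTop (nhds 0) := by
    have := hT.div (hden.pow 2) (by norm_num)
    rw [show (0:ℝ) / 1 ^ 2 = 0 by norm_num] at this
    exact this
  have hG : Tendsto (fun n : ℕ => 1/(1-r)^2 - ((n:ℝ)+1)^2 * r^n / (1 - r^(n+1))^2) atTop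
      (nhds (1/(1-r)^2)) := by
    have := (tendsto_const_nhds : Tendsto (fun _ : ℕ => 1/(1-r)^2) atTop (nhds (1/(1-r)^2))).sub hfrac
    simpa using this
  have hInv : Tendsto (fun n : ℕ => (1-r)/(1 - r^(n+1))) atTop (nhds (1-r)) := by
    have := (tendsto_const_nhds : Tendsto (fun _ : ℕ => 1-r) atTop (nhds (1-r))).div hden one_ne_zero
    rw [show (1 - r) / (1:ℝ) = 1 - r from div_one _] at this
    exact this
  have hmul := hG.mul hInv
  have hval : 1/(1-r)^2 * (1-r) = 1/(1-r) := by field_simp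
  rw [hval] at hmul
  refine hmul.congr fun n => ?_
  rw [← main_id r hr0 hr1 n, ← S0_inv r hr0 hr1 n, ← div_cube r hr0 n]

lemma limit_gt (r : ℝ) (hr : 1 < r)
    (hdet : ∀ n : ℕ, 0 ≤ S0 r n * SC r n - r * SB r n ^ 2) :
    Tendsto (fun n : ℕ => (S0 r n * SC r n - r * SB r n ^ 2) / (S0 r n)^3) atTop (nhds 0) := by
  have hr0 : (0:ℝ) ≤ r := by linarith
  have hrpos : (0:ℝ) < r := by linarith
  have hr1 : r ≠ 1 := ne_of_gt hr
  have hlow : ∀ n : ℕ, 0 ≤ (S0 r n * SC r n - r * SB r n ^ 2) / (S0 r n)^3 := fun n =>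
    div_nonneg (hdet n) (pow_nonneg (S0_pos r hr0 n).le 3)
  have hup : ∀ n : ℕ, (S0 r n * SC r n - r * SB r n ^ 2) / (S0 r n)^3 ≤
      (1/(r-1)^2) * (r⁻¹)^n := by
    intro n
    have hA := S0_pos r hr0 n
    have hd1 : (S0 r n * SC r n - r * SB r n ^ 2) / (S0 r n)^2 ≤ 1/(r-1)^2 := by
      rw [main_id r hr0 hr1 n, show ((1:ℝ)/(r-1)^2) = 1/(1-r)^2 by rw [show ((1:ℝ)-r)^2 = (r-1)^2 by ring]]
      have : (0:ℝ) ≤ ((n:ℝ)+1)^2 * r^n / (1 - r^(n+1))^2 := by positivity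
      linarith
    have hd0 : 0 ≤ (S0 r n * SC r n - r * SB r n ^ 2) / (S0 r n)^2 :=
      div_nonneg (hdet n) (by positivity)
    have hrn : (0:ℝ) < r^n := pow_pos hrpos n
    have hge : r^n ≤ S0 r n := by
      have := Finset.single_le_sum (f := fun k => r ^ k)
        (fun i _ => pow_nonneg hr0 i) (Finset.mem_range.2 (Nat.lt_succ_self n))
      simpa [S0] using this
    have h2 : (S0 r n)⁻¹ ≤ (r⁻¹)^n := by
      rw [inv_pow]
      exact inv_anti₀ hrn hge
    calc (S0 r n * SC r n - r * SB r n ^ 2) / (S0 r n)^3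
        = (S0 r n * SC r n - r * SB r n ^ 2) / (S0 r n)^2 * (S0 r n)⁻¹ := div_cube r hr0 n _
      _ ≤ (1/(r-1)^2) * (r⁻¹)^n :=
        mul_le_mul hd1 h2 (inv_nonneg.2 hA.le) (by positivity)
  have hgeo : Tendsto (fun n : ℕ => (1/(r-1)^2) * (r⁻¹)^n) atTop (nhds 0) := by
    have h := tendsto_pow_atTop_nhds_zero_of_lt_one (inv_nonneg.2 hr0)
      (inv_lt_one_of_one_lt₀ hr)
    have := h.const_mul (1/(r-1)^2)
    simpa using this
  exact squeeze_zero hlow hup hgeo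

/-- For `n ≥ 2` and `|z| ≠ 1`:
`|Σ_n|/a_n² = 1/(1-|z|²)² - (n+1)² |z|^{2n}/(1-|z|^{2n+2})²`; moreover for `|z| < 1` one has
`|Σ_n|/a_n³ ≤ 1/(1-|z|²)` and `|Σ_n|/a_n³ → 1/(1-|z|²)`, while for `|z| > 1` one has
`|Σ_n|/a_n³ ≤ 1/(|z|²-1)` and `|Σ_n|/a_n³ → 0`. -/
theorem kac_det_over_a_properties (z : ℂ) (hz : ‖z‖ ≠ 1) :
    (∀ n : ℕ, 2 ≤ n → kacDet n z / kacA n z ^ 2 =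
        1 / (1 - ‖z‖ ^ 2) ^ 2
          - (n + 1) ^ 2 * ‖z‖ ^ (2 * n) /
              (1 - ‖z‖ ^ (2 * n + 2)) ^ 2) ∧
    (‖z‖ < 1 →
      (∀ n : ℕ, 2 ≤ n →
          kacDet n z / kacA n z ^ 3 ≤ 1 / (1 - ‖z‖ ^ 2)) ∧
      Tendsto (fun n : ℕ => kacDet n z / kacA n z ^ 3) atTop
        (nhds (1 / (1 - ‖z‖ ^ 2)))) ∧
    (1 < ‖z‖ →
      (∀ n : ℕ, 2 ≤ n →
          kacDet n z / kacA n z ^ 3 ≤ 1 / (‖z‖ ^ 2 - 1)) ∧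
      Tendsto (fun n : ℕ => kacDet n z / kacA n z ^ 3) atTop (nhds 0)) := by
  set x := ‖z‖ with hxdef
  have hx0 : 0 ≤ x := norm_nonneg z
  have hr0 : (0:ℝ) ≤ x ^ 2 := sq_nonneg x
  have hr1 : x ^ 2 ≠ 1 := fun h => hz (by nlinarith)
  refine ⟨?_, fun hxlt => ⟨?_, ?_⟩, fun hxgt => ⟨?_, ?_⟩⟩
  · intro n _
    rw [kacDet_eq, kacA_eq, main_id (x^2) hr0 hr1 n,
      show 2*n+2 = 2*(n+1) by ring, pow_mul, pow_mul]
  · intro n _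
    rw [kacDet_eq, kacA_eq]
    exact bound_lt (x^2) hr0 (by nlinarith) n
  · refine (limit_lt (x^2) hr0 (by nlinarith)).congr fun n => ?_
    rw [kacDet_eq, kacA_eq]
  · intro n _
    rw [kacDet_eq, kacA_eq]
    exact bound_gt (x^2) (by nlinarith) n
  · refine (limit_gt (x^2) (by nlinarith) (fun n => det_nonneg x hx0 n)).congr fun n => ?_
    rw [kacDet_eq, kacA_eq]
end

section
/- Let r ∈ (0,1) and let p_n(z) = Σ_{k=0}^n a_k z^k where the a_k are i.i.d. standard complex Gaussian random variables. Then there exist N = N(r) ∈ ℕ and c_r > 0, both independent of n, such that for all n ≥ N the probability that sup_{|z| = r} |p_n(z)| < 1 (equivalently, that the closed disk B(0,r) is contained in a single connected component of U_n = {z : |p_n(z)| < 1}) is greater than c_r. -/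
open MeasureTheory Filter

/-- The standard complex Gaussian measure `N_ℂ(0,1)`,
with density `π⁻¹ exp(-|z|²)` with respect to Lebesgue measure on `ℂ`. -/
noncomputable def gaussC : Measure ℂ :=
  volume.withDensity fun z => ENNReal.ofReal (Real.exp (-(‖z‖ ^ 2)) / Real.pi)

/-- The law of the coefficient vector `(a_0, …, a_n)` of a Kac random polynomial:
`n+1` i.i.d. standard complex Gaussians. -/
noncomputable def kacMeasure (n : ℕ) : Measure (Fin (n + 1) → ℂ) :=
  Measure.pi fun _ => gaussC

/-- The lemniscate `{z ∈ ℂ : |p(z)| = 1}` of the polynomial with coefficients `a`. -/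
def lemniscate (n : ℕ) (a : Fin (n + 1) → ℂ) : Set ℂ :=
  {z : ℂ | ‖∑ k : Fin (n + 1), a k * z ^ (k : ℕ)‖ = 1}

namespace DiskAux

open Real Finset

lemma meas_gauss_real (b : ℝ) : Measurable fun x : ℝ => ENNReal.ofReal (Real.exp (-b * x ^ 2)) := by
  apply Measurable.ennreal_ofReal
  exact (Real.continuous_exp.comp (by continuity)).measurable

lemma meas_gauss_density (b : ℝ) :
    Measurable fun z : ℂ => ENNReal.ofReal (Real.exp (-b * ‖z‖ ^ 2)) := by
  apply Measurable.ennreal_ofReal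
  exact (Real.continuous_exp.comp (by continuity)).measurable

lemma lintegral_gauss_real {b : ℝ} (hb : 0 < b) :
    ∫⁻ x : ℝ, ENNReal.ofReal (Real.exp (-b * x ^ 2)) = ENNReal.ofReal (Real.sqrt (π / b)) := by
  rw [← integral_gaussian b, ofReal_integral_eq_lintegral_ofReal (integrable_exp_neg_mul_sq hb)]
  exact Filter.Eventually.of_forall fun x => (Real.exp_pos _).le

lemma lintegral_gaussC {b : ℝ} (hb : 0 < b) :
    ∫⁻ z : ℂ, ENNReal.ofReal (Real.exp (-b * ‖z‖ ^ 2)) = ENNReal.ofReal (π / b) := by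
  have h := (Complex.volume_preserving_equiv_real_prod.symm).lintegral_comp
    (f := fun z : ℂ => ENNReal.ofReal (Real.exp (-b * ‖z‖ ^ 2)))
    (meas_gauss_density b)
  rw [← h]
  have key : ∀ p : ℝ × ℝ,
      ENNReal.ofReal (Real.exp (-b * ‖Complex.measurableEquivRealProd.symm p‖ ^ 2))
      = ENNReal.ofReal (Real.exp (-b * p.1 ^ 2)) * ENNReal.ofReal (Real.exp (-b * p.2 ^ 2)) := by
    intro p
    rw [← ENNReal.ofReal_mul (Real.exp_pos _).le, ← Real.exp_add]
    congr 1
    have : ‖Complex.measurableEquivRealProd.symm p‖ ^ 2 = p.1^2 + p.2^2 := by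
      rw [Complex.sq_norm]
      simp [Complex.measurableEquivRealProd, Complex.normSq_apply]
      ring
    rw [this]; ring
  simp_rw [key]
  have h2 : ∫⁻ (a : ℝ × ℝ), ENNReal.ofReal (rexp (-b * a.1 ^ 2)) * ENNReal.ofReal (rexp (-b * a.2 ^ 2))
      = ENNReal.ofReal (Real.sqrt (π / b)) * ENNReal.ofReal (Real.sqrt (π / b)) := by
    rw [show (volume : Measure (ℝ×ℝ)) = (volume : Measure ℝ).prod volume from Measure.volume_eq_prod _ _]
    rw [← lintegral_gauss_real hb]
    exact lintegral_prod_mul (meas_gauss_real b).aemeasurable (meas_gauss_real b).aemeasurable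
  rw [h2, ← ENNReal.ofReal_mul (Real.sqrt_nonneg _),
    Real.mul_self_sqrt (div_nonneg pi_pos.le hb.le)]

lemma density_eq (z : ℂ) :
    ENNReal.ofReal (Real.exp (-(‖z‖ ^ 2)) / Real.pi)
      = ENNReal.ofReal (Real.exp (-1 * ‖z‖ ^ 2)) * ENNReal.ofReal π⁻¹ := by
  rw [div_eq_mul_inv, ENNReal.ofReal_mul (Real.exp_pos _).le, neg_one_mul]

lemma gaussC_univ : gaussC Set.univ = 1 := by
  rw [gaussC, withDensity_apply _ MeasurableSet.univ, Measure.restrict_univ]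
  simp_rw [density_eq]
  rw [lintegral_mul_const _ (meas_gauss_density 1), lintegral_gaussC one_pos,
    ← ENNReal.ofReal_mul (by positivity)]
  rw [div_one, mul_inv_cancel₀ pi_pos.ne']
  exact ENNReal.ofReal_one

instance : IsProbabilityMeasure gaussC := ⟨gaussC_univ⟩

lemma gaussC_tail {R : ℝ} (hR : 0 ≤ R) :
    gaussC {z : ℂ | R < ‖z‖} ≤ ENNReal.ofReal (2 * Real.exp (-(R ^ 2) / 2)) := by
  have hmeas : MeasurableSet {z : ℂ | R < ‖z‖} :=
    measurableSet_lt measurable_const continuous_norm.measurable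
  rw [gaussC, withDensity_apply _ hmeas]
  have hpt : ∀ z ∈ {z : ℂ | R < ‖z‖},
      ENNReal.ofReal (Real.exp (-(‖z‖ ^ 2)) / Real.pi)
        ≤ ENNReal.ofReal (Real.exp (-(R^2)/2) / π) * ENNReal.ofReal (Real.exp (-(1/2) * ‖z‖ ^ 2)) := by
    intro z hz
    rw [← ENNReal.ofReal_mul (by positivity)]
    apply ENNReal.ofReal_le_ofReal
    rw [div_mul_eq_mul_div, ← Real.exp_add]
    have h1 : R ^ 2 ≤ ‖z‖ ^ 2 := pow_le_pow_left₀ hR (le_of_lt hz) 2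
    gcongr
    nlinarith
  calc ∫⁻ z in {z : ℂ | R < ‖z‖}, ENNReal.ofReal (Real.exp (-(‖z‖ ^ 2)) / Real.pi)
      ≤ ∫⁻ z in {z : ℂ | R < ‖z‖},
        ENNReal.ofReal (Real.exp (-(R^2)/2) / π) * ENNReal.ofReal (Real.exp (-(1/2) * ‖z‖ ^ 2)) :=
        setLIntegral_mono ((meas_gauss_density (1/2)).const_mul _) hpt
    _ ≤ ∫⁻ z : ℂ, ENNReal.ofReal (Real.exp (-(R^2)/2) / π) * ENNReal.ofReal (Real.exp (-(1/2) * ‖z‖ ^ 2)) :=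
        setLIntegral_le_lintegral _ _
    _ = ENNReal.ofReal (Real.exp (-(R^2)/2) / π) * ENNReal.ofReal (π / (1/2)) := by
        rw [lintegral_const_mul _ (meas_gauss_density (1/2)), lintegral_gaussC (by norm_num)]
    _ = ENNReal.ofReal (2 * Real.exp (-(R ^ 2) / 2)) := by
        rw [← ENNReal.ofReal_mul (by positivity)]
        congr 1
        field_simp

lemma gaussC_closedBall_lower {R : ℝ} (hR : 0 ≤ R) :
    ENNReal.ofReal (1 - 2 * Real.exp (-(R ^ 2) / 2)) ≤ gaussC (Metric.closedBall 0 R) := by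
  have hmeas : MeasurableSet {z : ℂ | R < ‖z‖} :=
    measurableSet_lt measurable_const continuous_norm.measurable
  have hcompl : {z : ℂ | R < ‖z‖}ᶜ = Metric.closedBall 0 R := by
    ext z
    simp [Metric.mem_closedBall, Complex.dist_eq, not_lt]
  rw [← hcompl, measure_compl hmeas (measure_ne_top _ _), gaussC_univ]
  rw [ENNReal.ofReal_sub _ (by positivity), ENNReal.ofReal_one]
  exact tsub_le_tsub_left (gaussC_tail hR) 1

lemma gaussC_closedBall_pos {R : ℝ} (hR : 0 < R) : 0 < gaussC (Metric.closedBall 0 R) := by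
  have hmeas : MeasurableSet (Metric.closedBall (0:ℂ) R) := measurableSet_closedBall
  rw [gaussC, withDensity_apply _ hmeas]
  have hpt : ∀ z ∈ Metric.closedBall (0:ℂ) R,
      ENNReal.ofReal (Real.exp (-(R ^ 2)) / π) ≤ ENNReal.ofReal (Real.exp (-(‖z‖ ^ 2)) / Real.pi) := by
    intro z hz
    apply ENNReal.ofReal_le_ofReal
    rw [Metric.mem_closedBall, Complex.dist_eq, sub_zero] at hz
    have h2 : ‖z‖ ^ 2 ≤ R ^ 2 := pow_le_pow_left₀ (norm_nonneg z) hz 2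
    gcongr
  calc (0:ENNReal) < ENNReal.ofReal (Real.exp (-(R ^ 2)) / π) * volume (Metric.closedBall (0:ℂ) R) := by
        apply ENNReal.mul_pos
        · simp [ENNReal.ofReal_pos]; positivity
        · exact (Metric.measure_closedBall_pos volume 0 hR).ne'
    _ = ∫⁻ _ in Metric.closedBall (0:ℂ) R, ENNReal.ofReal (Real.exp (-(R ^ 2)) / π) := by
        rw [setLIntegral_const]
    _ ≤ ∫⁻ z in Metric.closedBall (0:ℂ) R, ENNReal.ofReal (Real.exp (-(‖z‖ ^ 2)) / Real.pi) := by
        apply setLIntegral_mono _ hpt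
        apply Measurable.ennreal_ofReal
        exact ((Real.continuous_exp.comp (by continuity)).div_const _).measurable

lemma prod_one_sub_ge (s : Finset ℕ) (f : ℕ → ℝ) (h0 : ∀ i ∈ s, 0 ≤ f i) (h1 : ∀ i ∈ s, f i ≤ 1) :
    1 - ∑ i ∈ s, f i ≤ ∏ i ∈ s, (1 - f i) := by
  classical
  induction s using Finset.induction_on with
  | empty => simp
  | insert _ _ hx ih =>
    rename_i a s
    rw [Finset.prod_insert hx, Finset.sum_insert hx]
    have h0' : ∀ i ∈ s, 0 ≤ f i := fun i hi => h0 i (Finset.mem_insert_of_mem hi)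
    have h1' : ∀ i ∈ s, f i ≤ 1 := fun i hi => h1 i (Finset.mem_insert_of_mem hi)
    have ih' := ih h0' h1'
    have ha0 : 0 ≤ f a := h0 a (Finset.mem_insert_self a s)
    have ha1 : f a ≤ 1 := h1 a (Finset.mem_insert_self a s)
    have hs0 : 0 ≤ ∑ i ∈ s, f i := Finset.sum_nonneg h0'
    nlinarith [mul_le_mul_of_nonneg_left ih' (by linarith : (0:ℝ) ≤ 1 - f a)]

end DiskAux


open DiskAux Real Finset in
/-- For fixed `r ∈ (0,1)` there exist `N = N(r)` and `c_r > 0`, independent of `n`, such that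
for all `n ≥ N` the probability that `|p_n| < 1 holds on the whole circle `|z| = r`
(equivalently, `sup_{|z|=r} |p_n(z)| < 1`, i.e. the closed disk `B(0,r)` lies in a single
connected component of `U_n = {|p_n| < 1}`) exceeds `c_r`. -/
theorem disk_in_sublevel_set_positive_probability (r : ℝ) (hr0 : 0 < r) (hr1 : r < 1) :
    ∃ N : ℕ, ∃ c > (0 : ℝ), ∀ n ≥ N,
      ENNReal.ofReal c <
        kacMeasure n {a | ∀ z : ℂ, ‖z‖ = r →
          ‖∑ k : Fin (n + 1), a k * z ^ (k : ℕ)‖ < 1} := by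
  -- parameters
  set t : ℝ := (1 + r) / (2 * r) with ht_def
  have htr : t * r = (1 + r) / 2 := by rw [ht_def]; field_simp
  have ht1 : 1 < t := by rw [ht_def, lt_div_iff₀ (by positivity)]; linarith
  have ht0 : 0 < t := lt_trans one_pos ht1
  have hs0 : 0 ≤ t * r := by rw [htr]; linarith
  have hs1 : t * r < 1 := by rw [htr]; linarith
  set C : ℝ := (1 - r) / 4 with hC_def
  have hC : 0 < C := by rw [hC_def]; linarith
  set q : ℝ := (t ^ 2)⁻¹ with hq_def
  have hq0 : 0 ≤ q := by positivity
  have hq1 : q < 1 := by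
    rw [hq_def, inv_lt_one_iff₀]; right; nlinarith
  obtain ⟨K, hK⟩ := exists_pow_lt_of_lt_one
    (show (0:ℝ) < (1 - q) * C ^ 2 / 8 from
      div_pos (mul_pos (by linarith) (pow_pos hC 2)) (by norm_num)) hq1
  set D : ENNReal := gaussC (Metric.closedBall 0 C) with hD_def
  have hD0 : 0 < D := gaussC_closedBall_pos hC
  have hDtop : D ≠ ⊤ := measure_ne_top _ _
  set V : ENNReal := D ^ K * ENNReal.ofReal (1 / 2) with hV_def
  have hV0 : V ≠ 0 := by
    apply mul_ne_zero (pow_ne_zero _ hD0.ne')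
    simp [ENNReal.ofReal_pos]
  have hVtop : V ≠ ⊤ := ENNReal.mul_ne_top (ENNReal.pow_ne_top hDtop) ENNReal.ofReal_ne_top
  have hVt : 0 < V.toReal := ENNReal.toReal_pos hV0 hVtop
  refine ⟨K, V.toReal / 2, by linarith, fun n hn => ?_⟩
  have hVlt : ENNReal.ofReal (V.toReal / 2) < V := by
    rw [ENNReal.ofReal_lt_iff_lt_toReal (by linarith) hVtop]
    linarith
  refine lt_of_lt_of_le hVlt ?_
  -- the product event
  set S : Set (Fin (n+1) → ℂ) :=
    Set.univ.pi (fun k : Fin (n+1) => Metric.closedBall (0:ℂ) (C * t ^ (k:ℕ))) with hS_def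
  have hsub : S ⊆ {a : Fin (n+1) → ℂ | ∀ z : ℂ, ‖z‖ = r →
      ‖∑ k : Fin (n + 1), a k * z ^ (k : ℕ)‖ < 1} := by
    intro a ha z hz
    have habs : ∀ k : Fin (n+1), ‖a k‖ ≤ C * t ^ (k:ℕ) := by
      intro k
      have := Set.mem_univ_pi.mp ha k
      rwa [Metric.mem_closedBall, Complex.dist_eq, sub_zero] at this
    calc ‖∑ k : Fin (n + 1), a k * z ^ (k : ℕ)‖
        ≤ ∑ k : Fin (n + 1), ‖a k * z ^ (k : ℕ)‖ := norm_sum_le _ _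
      _ ≤ ∑ k : Fin (n + 1), C * (t * r) ^ (k:ℕ) := by
          apply Finset.sum_le_sum
          intro k _
          rw [norm_mul, norm_pow, hz, mul_pow]
          calc ‖a k‖ * r ^ (k:ℕ)
              ≤ C * t ^ (k:ℕ) * r ^ (k:ℕ) :=
                mul_le_mul_of_nonneg_right (habs k) (pow_nonneg hr0.le _)
            _ = C * (t ^ (k:ℕ) * r ^ (k:ℕ)) := by ring
      _ = C * ∑ k ∈ Finset.range (n+1), (t * r) ^ k := by
          rw [← Finset.mul_sum, Fin.sum_univ_eq_sum_range]
      _ ≤ C * ((t*r) ^ 0 / (1 - t * r)) := by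
          apply mul_le_mul_of_nonneg_left _ hC.le
          rw [Finset.range_eq_Ico]
          exact geom_sum_Ico_le_of_lt_one hs0 hs1
      _ = 1/2 := by
          have h1r : (1:ℝ) - r ≠ 0 := by intro h; linarith [sub_eq_zero.mp h]
          rw [pow_zero, htr, hC_def]
          rw [show (1:ℝ) - (1 + r) / 2 = (1 - r) / 2 by ring]
          field_simp
          ring
      _ < 1 := by norm_num
  refine le_trans ?_ (measure_mono hsub)
  -- compute the measure of S
  have hpi : kacMeasure n S =
      ∏ k ∈ Finset.range (n+1), gaussC (Metric.closedBall (0:ℂ) (C * t ^ k)) := by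
    rw [hS_def, kacMeasure, Measure.pi_pi]
    exact Fin.prod_univ_eq_prod_range (fun k => gaussC (Metric.closedBall (0:ℂ) (C * t ^ k))) (n+1)
  rw [hpi, ← Finset.prod_range_mul_prod_Ico _ (show K ≤ n + 1 by omega)]
  -- lower bound the head
  have hhead : D ^ K ≤ ∏ k ∈ Finset.range K, gaussC (Metric.closedBall (0:ℂ) (C * t ^ k)) := by
    have : ∀ k ∈ Finset.range K, D ≤ gaussC (Metric.closedBall (0:ℂ) (C * t ^ k)) := by
      intro k _
      apply measure_mono
      apply Metric.closedBall_subset_closedBall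
      calc C = C * 1 := (mul_one C).symm
        _ ≤ C * t ^ k := by
            apply mul_le_mul_of_nonneg_left (one_le_pow₀ ht1.le) hC.le
    calc D ^ K = ∏ _k ∈ Finset.range K, D := by rw [Finset.prod_const, Finset.card_range]
      _ ≤ _ := Finset.prod_le_prod' this
  -- lower bound the tail
  set ε : ℕ → ℝ := fun k => 2 * Real.exp (-((C * t ^ k) ^ 2) / 2) with hε_def
  have hε0 : ∀ k, 0 ≤ ε k := fun k => by simp only [hε_def]; positivity
  have hεle : ∀ k, ε k ≤ 4 / C ^ 2 * q ^ k := by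
    intro k
    have hx : 0 < (C * t ^ k) ^ 2 / 2 := by positivity
    have hexp : Real.exp (-((C * t ^ k) ^ 2) / 2) ≤ ((C * t ^ k) ^ 2 / 2)⁻¹ := by
      rw [show -((C * t ^ k) ^ 2) / 2 = -((C * t ^ k) ^ 2 / 2) by ring, Real.exp_neg]
      apply inv_anti₀ hx
      have := Real.add_one_le_exp ((C * t ^ k) ^ 2 / 2)
      linarith
    have htne : t ≠ 0 := ht0.ne'
    have hCne : C ≠ 0 := hC.ne'
    calc ε k = 2 * Real.exp (-((C * t ^ k) ^ 2) / 2) := rfl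
      _ ≤ 2 * ((C * t ^ k) ^ 2 / 2)⁻¹ := mul_le_mul_of_nonneg_left hexp (by norm_num)
      _ = 4 / C ^ 2 * q ^ k := by
          rw [hq_def, ← inv_pow, ← pow_mul, mul_pow, ← pow_mul]
          rw [mul_comm 2 k]
          field_simp
          ring_nf
          rw [← mul_pow, mul_inv_cancel₀ htne, one_pow, one_mul]
  have hsum : ∑ k ∈ Finset.Ico K (n+1), ε k ≤ 1 / 2 := by
    calc ∑ k ∈ Finset.Ico K (n+1), ε k ≤ ∑ k ∈ Finset.Ico K (n+1), 4 / C ^ 2 * q ^ k :=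
          Finset.sum_le_sum fun k _ => hεle k
      _ = 4 / C ^ 2 * ∑ k ∈ Finset.Ico K (n+1), q ^ k := by rw [Finset.mul_sum]
      _ ≤ 4 / C ^ 2 * (q ^ K / (1 - q)) := by
          apply mul_le_mul_of_nonneg_left (geom_sum_Ico_le_of_lt_one hq0 hq1) (by positivity)
      _ ≤ 1 / 2 := by
          have h1q : (0:ℝ) < 1 - q := by linarith
          have heq : 4 / C ^ 2 * (q ^ K / (1 - q)) = 4 * q ^ K / (C ^ 2 * (1 - q)) := by
            field_simp
          rw [heq, div_le_iff₀ (mul_pos (pow_pos hC 2) h1q)]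
          nlinarith
  have hε1 : ∀ k ∈ Finset.Ico K (n+1), ε k ≤ 1 := by
    intro k hk
    calc ε k ≤ ∑ j ∈ Finset.Ico K (n+1), ε j := Finset.single_le_sum (fun j _ => hε0 j) hk
      _ ≤ 1 := by linarith
  have htail : ENNReal.ofReal (1/2) ≤
      ∏ k ∈ Finset.Ico K (n+1), gaussC (Metric.closedBall (0:ℂ) (C * t ^ k)) := by
    have hfac : ∀ k ∈ Finset.Ico K (n+1),
        ENNReal.ofReal (1 - ε k) ≤ gaussC (Metric.closedBall (0:ℂ) (C * t ^ k)) := by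
      intro k _
      have h := gaussC_closedBall_lower (R := C * t ^ k) (by positivity)
      have heq : ε k = 2 * Real.exp (-((C * t ^ k) ^ 2) / 2) := rfl
      rw [heq]
      exact h
    calc ENNReal.ofReal (1/2) ≤ ENNReal.ofReal (∏ k ∈ Finset.Ico K (n+1), (1 - ε k)) := by
          apply ENNReal.ofReal_le_ofReal
          calc (1:ℝ)/2 ≤ 1 - ∑ k ∈ Finset.Ico K (n+1), ε k := by linarith
            _ ≤ _ := prod_one_sub_ge _ _ (fun k _ => hε0 k) hε1
      _ = ∏ k ∈ Finset.Ico K (n+1), ENNReal.ofReal (1 - ε k) := by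
          apply ENNReal.ofReal_prod_of_nonneg
          intro k hk
          linarith [hε1 k hk]
      _ ≤ _ := Finset.prod_le_prod' hfac
  calc V = D ^ K * ENNReal.ofReal (1/2) := hV_def
    _ ≤ _ := mul_le_mul' hhead htail
end
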